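/- Let n11, n22, n12, n21 ∈ ℕ satisfy (n22−n21)⁺ − (n22−n12)⁺ ≤ ((n12−n11)⁺ − (n21−n11)⁺)⁺ and (n11−n12)⁺ − (n11−n21)⁺ ≤ ((n21−n22)⁺ − (n12−n22)⁺)⁺. Then every rate pair (R1,R2) in C_LDIC/FB achieving the maximum sum-rate R1+R2 = min(max(n22,n21)+(n11−n21)⁺, max(n11,n12)+(n22−n12)⁺) and with R1 ≤ min(max(n11,n12),max(n11,n21)), R2 ≤ min(max(n22,n21),max(n22,n12)), R1,R2 ≥ 0, satisfies R1 ≥ (n11−n12)⁺ and R2 ≥ (n22−n21)⁺. -/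
import Mathlib

lemma max_sub_add (x y : ℝ) : max x y = max (x - y) 0 + y := by
  rcases max_cases x y with ⟨e,le⟩|⟨e,le⟩ <;>
  rcases max_cases (x - y) (0:ℝ) with ⟨e2,le2⟩|⟨e2,le2⟩ <;> linarith

lemma aux_sum_rate (a b c d R1 R2 : ℝ)
    (h : max (a-c) 0 - max (a-d) 0 ≤ max (max (d-b) 0 - max (c-b) 0) 0)
    (c2 : R2 ≤ min (max b d) (max b c))
    (hsum : R1 + R2 = min (max b d + max (a-d) 0) (max a c + max (b-c) 0)) :
    max (a-c) 0 ≤ R1 := by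
  have hm1 : min (max b d) (max b c) ≤ max b d := min_le_left _ _
  have hm2 : min (max b d) (max b c) ≤ max b c := min_le_right _ _
  have eac : max a c = max (a-c) 0 + c := max_sub_add a c
  have ebc : max b c = max (b-c) 0 + c := max_sub_add b c
  have hcb : (0:ℝ) ≤ max (c-b) 0 := le_max_right _ _
  -- key: max (a-c) 0 + min (max b d) (max b c) ≤ S (both components)
  have key1 : max (a-c) 0 + min (max b d) (max b c) ≤ max b d + max (a-d) 0 := by
    rcases max_cases (max (d-b) 0 - max (c-b) 0) (0:ℝ) with ⟨e,le⟩|⟨e,le⟩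
    · rcases le_total d b with hdb | hdb
      · have : max (d-b) 0 = 0 := max_eq_right (by linarith)
        rw [e, this] at h; linarith
      · have h1 : max (d-b) 0 = d - b := max_eq_left (by linarith)
        have h2 : max b d = d := max_eq_right hdb
        have ecb : max b c = max (c-b) 0 + b := by rw [max_comm]; exact max_sub_add c b
        rw [e, h1] at h; linarith [ecb, hm2, h2]
    · rw [e] at h; linarith
  have key2 : max (a-c) 0 + min (max b d) (max b c) ≤ max a c + max (b-c) 0 := by
    linarith [hm2, eac, ebc]
  have : max (a-c) 0 + min (max b d) (max b c) ≤
      min (max b d + max (a-d) 0) (max a c + max (b-c) 0) := le_min key1 key2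
  linarith [this.trans_eq hsum.symm]

theorem sum_rate_optimal_in_ne_region (n11 n22 n12 n21 : ℕ)
    (h1 : max ((n22 : ℝ) - n21) 0 - max ((n22 : ℝ) - n12) 0 ≤
          max (max ((n12 : ℝ) - n11) 0 - max ((n21 : ℝ) - n11) 0) 0)
    (h2 : max ((n11 : ℝ) - n12) 0 - max ((n11 : ℝ) - n21) 0 ≤
          max (max ((n21 : ℝ) - n22) 0 - max ((n12 : ℝ) - n22) 0) 0)
    (R1 R2 : ℝ) (hR1 : 0 ≤ R1) (hR2 : 0 ≤ R2)
    (c1 : R1 ≤ min (max (n11 : ℝ) (n12 : ℝ)) (max (n11 : ℝ) (n21 : ℝ)))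
    (c2 : R2 ≤ min (max (n22 : ℝ) (n21 : ℝ)) (max (n22 : ℝ) (n12 : ℝ)))
    (hsum : R1 + R2 = min (max (n22 : ℝ) (n21 : ℝ) + max ((n11 : ℝ) - n21) 0)
                          (max (n11 : ℝ) (n12 : ℝ) + max ((n22 : ℝ) - n12) 0)) :
    max ((n11 : ℝ) - n12) 0 ≤ R1 ∧ max ((n22 : ℝ) - n21) 0 ≤ R2 := by
  constructor
  · exact aux_sum_rate (n11:ℝ) (n22:ℝ) (n12:ℝ) (n21:ℝ) R1 R2 h2 c2 hsum
  · refine aux_sum_rate (n22:ℝ) (n11:ℝ) (n21:ℝ) (n12:ℝ) R2 R1 h1 c1 ?_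
    rw [min_comm]; linarith [hsum]
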